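/- Let s ≥ 2 and let FQ^s be the s-dimensional folded hypercube. Then θ_{FQ^s}(2^{s−1}) = 2^s; that is, the minimum, over all subsets S of V(FQ^s) with |S| = 2^{s−1}, of the number of edges of FQ^s with exactly one endpoint in S, equals 2^s. -/

import Mathlib

open scoped Classical

/-- Number of edges of `G` with exactly one endpoint in `S`. -/
noncomputable def boundaryCount {V : Type*} [Fintype V] (G : SimpleGraph V)
    (S : Finset V) : ℕ :=
  (G.edgeFinset.filter (fun e => ∃ x y, e = s(x, y) ∧ x ∈ S ∧ y ∉ S)).card

/-- `θ_G(m)`: minimum number of boundary edges over all `m`-subsets. -/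
noncomputable def minCut {V : Type*} [Fintype V] (G : SimpleGraph V) (m : ℕ) : ℕ :=
  sInf {c | ∃ S : Finset V, S.card = m ∧ c = boundaryCount G S}

/-- The `s`-dimensional folded hypercube `FQ^s`, with vertices identified with
the integers `0, 1, …, 2^s − 1` via binary representation: two vertices are
adjacent iff they differ in exactly one coordinate (bitwise xor a power of two
`2^i`, `i < s`) or in all `s` coordinates (bitwise xor equal to `2^s − 1`). -/
def foldedHypercube (s : ℕ) : SimpleGraph (Fin (2 ^ s)) :=
  SimpleGraph.fromRel
    (fun u v => (∃ i < s, u.val ^^^ v.val = 2 ^ i) ∨ u.val ^^^ v.val = 2 ^ s - 1)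

open Finset

namespace FQAux

/-! ### Characters of `(ℤ/2)^s` -/

noncomputable def chi (s a u : ℕ) : ℤ :=
  ∏ i ∈ Finset.range s, (if a.testBit i ∧ u.testBit i then (-1 : ℤ) else 1)

lemma chi_comm (s a u : ℕ) : chi s a u = chi s u a :=
  Finset.prod_congr rfl fun i _ => by
    cases ha : a.testBit i <;> cases hu : u.testBit i <;> simp

lemma chi_mul_chi (s a u v : ℕ) : chi s a u * chi s a v = chi s a (u ^^^ v) := by
  unfold chi
  rw [← Finset.prod_mul_distrib]
  refine Finset.prod_congr rfl fun i _ => ?_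
  rw [Nat.testBit_xor]
  cases ha : a.testBit i <;> cases hu : u.testBit i <;> cases hv : v.testBit i <;> simp

lemma chi_zero_right (s a : ℕ) : chi s a 0 = 1 :=
  Finset.prod_eq_one fun i _ => by simp [Nat.zero_testBit]

lemma chi_zero_left (s u : ℕ) : chi s 0 u = 1 := by
  rw [chi_comm]; exact chi_zero_right s u

lemma chi_two_pow (s a i : ℕ) (hi : i < s) :
    chi s a (2 ^ i) = if a.testBit i then (-1 : ℤ) else 1 := by
  unfold chi
  rw [Finset.prod_eq_single i]
  · simp [Nat.testBit_two_pow]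
  · intro j _ hj
    simp only [Nat.testBit_two_pow]
    rw [if_neg]; rintro ⟨-, h⟩; simp at h; omega
  · intro h; exact absurd (Finset.mem_range.mpr hi) h

lemma chi_ones (s a : ℕ) :
    chi s a (2 ^ s - 1) = (-1 : ℤ) ^ ((Finset.range s).filter (fun i => a.testBit i)).card := by
  unfold chi
  have h : (∏ i ∈ range s, if a.testBit i ∧ (2^s-1).testBit i then (-1:ℤ) else 1)
      = ∏ i ∈ range s, if a.testBit i then (-1:ℤ) else 1 :=
    Finset.prod_congr rfl fun i hi => by
      simp [Nat.testBit_two_pow_sub_one, Finset.mem_range.mp hi]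
  rw [h, Finset.prod_ite, Finset.prod_const, Finset.prod_const, one_pow, mul_one]

lemma xor_eq_iff {u v t : ℕ} : u ^^^ v = t ↔ v = u ^^^ t := by
  constructor
  · rintro rfl; rw [← Nat.xor_assoc, Nat.xor_self, Nat.zero_xor]
  · rintro rfl; rw [← Nat.xor_assoc, Nat.xor_self, Nat.zero_xor]

lemma xor_xor_self (u d : ℕ) : u ^^^ (u ^^^ d) = d := by
  rw [← Nat.xor_assoc, Nat.xor_self, Nat.zero_xor]

lemma exists_testBit {s a : ℕ} (ha : a < 2 ^ s) (h0 : a ≠ 0) :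
    ∃ i < s, a.testBit i = true := by
  obtain ⟨i, hib⟩ : ∃ i, a.testBit i = true := by
    by_contra h
    push_neg at h
    exact h0 (Nat.eq_of_testBit_eq fun i => by simp [Nat.zero_testBit]; simpa using h i)
  refine ⟨i, ?_, hib⟩
  by_contra h
  push_neg at h
  exact absurd (Nat.ge_two_pow_of_testBit hib) (by
    push_neg
    calc a < 2^s := ha
      _ ≤ 2^i := Nat.pow_le_pow_right (by norm_num) h)

/-- Orthogonality of characters. -/
lemma sum_chi (s a : ℕ) (ha : a < 2 ^ s) :
    ∑ u ∈ Finset.range (2 ^ s), chi s a u = if a = 0 then (2 ^ s : ℤ) else 0 := by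
  rcases eq_or_ne a 0 with rfl | h0
  · simp [chi_zero_left]
  · rw [if_neg h0]
    obtain ⟨i, his, hib⟩ := exists_testBit ha h0
    refine Finset.sum_involution (fun u _ => u ^^^ 2 ^ i) ?_ ?_ ?_ ?_
    · intro u hu
      have h : chi s a (u ^^^ 2 ^ i) = chi s a u * chi s a (2 ^ i) := (chi_mul_chi ..).symm
      rw [h, chi_two_pow s a i his, if_pos hib]
      ring
    · intro u hu _
      intro h
      have h2 : u ^^^ 2 ^ i ^^^ u = u ^^^ u := by rw [h]
      rw [Nat.xor_comm u (2^i), Nat.xor_assoc, Nat.xor_self, Nat.xor_zero] at h2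
      exact (by positivity : (0:ℕ) < 2 ^ i).ne' h2
    · intro u hu
      exact Finset.mem_range.mpr (Nat.xor_lt_two_pow (Finset.mem_range.mp hu)
        (Nat.pow_lt_pow_right (by norm_num) his))
    · intro u hu
      rw [Nat.xor_assoc, Nat.xor_self, Nat.xor_zero]

/-- The key Fourier identity. -/
lemma key_sum (s : ℕ) (f : ℕ → ℤ) (t : ℕ) (ht : t < 2 ^ s) :
    ∑ a ∈ range (2^s), (∑ u ∈ range (2^s), f u * chi s a u)^2 * chi s a t
    = (2 ^ s : ℤ) * ∑ u ∈ range (2^s), f u * f (u ^^^ t) := by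
  calc ∑ a ∈ range (2^s), (∑ u ∈ range (2^s), f u * chi s a u)^2 * chi s a t
      = ∑ a ∈ range (2^s), ∑ u ∈ range (2^s), ∑ v ∈ range (2^s),
          f u * f v * chi s a ((u ^^^ v) ^^^ t) := by
        refine Finset.sum_congr rfl fun a _ => ?_
        rw [sq, Finset.sum_mul_sum, Finset.sum_mul]
        refine Finset.sum_congr rfl fun u _ => ?_
        rw [Finset.sum_mul]
        refine Finset.sum_congr rfl fun v _ => ?_
        rw [← chi_mul_chi s a (u^^^v) t, ← chi_mul_chi s a u v]; ring
    _ = ∑ u ∈ range (2^s), ∑ v ∈ range (2^s),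
          f u * f v * ∑ a ∈ range (2^s), chi s a ((u ^^^ v) ^^^ t) := by
        rw [Finset.sum_comm]
        refine Finset.sum_congr rfl fun u _ => ?_
        rw [Finset.sum_comm]
        refine Finset.sum_congr rfl fun v _ => Finset.mul_sum _ _ _ |>.symm
    _ = ∑ u ∈ range (2^s), ∑ v ∈ range (2^s),
          (if v = u ^^^ t then f u * f v * (2^s : ℤ) else 0) := by
        refine Finset.sum_congr rfl fun u hu => Finset.sum_congr rfl fun v hv => ?_
        have hw : (u ^^^ v) ^^^ t < 2 ^ s :=
          Nat.xor_lt_two_pow (Nat.xor_lt_two_pow (mem_range.mp hu) (mem_range.mp hv)) ht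
        have h : ∑ a ∈ range (2^s), chi s a ((u ^^^ v) ^^^ t)
            = if v = u ^^^ t then (2^s : ℤ) else 0 := by
          have h1 : ∀ a, chi s a ((u ^^^ v) ^^^ t) = chi s ((u ^^^ v) ^^^ t) a :=
            fun a => chi_comm ..
          simp only [h1]
          rw [sum_chi s _ hw]
          congr 1
          simp only [eq_iff_iff]
          rw [xor_eq_zero_iff, xor_eq_iff]
        rw [h, mul_ite, mul_zero]
    _ = (2 ^ s : ℤ) * ∑ u ∈ range (2^s), f u * f (u ^^^ t) := by
        rw [Finset.mul_sum]
        refine Finset.sum_congr rfl fun u hu => ?_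
        rw [Finset.sum_ite_eq' (range (2^s)) (u ^^^ t) (fun v => f u * f v * (2^s:ℤ)),
          if_pos (mem_range.mpr (Nat.xor_lt_two_pow (mem_range.mp hu) ht))]
        ring

/-! ### Directions of the folded hypercube -/

def dirs (s : ℕ) : Finset ℕ := ((range s).image (2 ^ ·)) ∪ {2^s - 1}

lemma mem_dirs {s d : ℕ} : d ∈ dirs s ↔ (∃ i < s, d = 2^i) ∨ d = 2^s - 1 := by
  simp [dirs, eq_comm]
  exact or_comm

lemma dirs_ne_zero {s : ℕ} (hs : 1 ≤ s) {d : ℕ} (hd : d ∈ dirs s) : d ≠ 0 := by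
  rw [mem_dirs] at hd
  have h2 : 2 ^ 1 ≤ 2 ^ s := Nat.pow_le_pow_right (by norm_num) hs
  rw [pow_one] at h2
  rcases hd with ⟨i, _, rfl⟩ | rfl
  · positivity
  · omega

lemma dirs_lt {s d : ℕ} (hd : d ∈ dirs s) : d < 2 ^ s := by
  rw [mem_dirs] at hd
  have : 0 < 2^s := by positivity
  rcases hd with ⟨i, hi, rfl⟩ | rfl
  · exact Nat.pow_lt_pow_right (by norm_num) hi
  · omega

lemma dirs_disjoint {s : ℕ} (hs : 2 ≤ s) :
    Disjoint ((range s).image (2 ^ ·)) ({2^s - 1} : Finset ℕ) := by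
  rw [Finset.disjoint_left]
  rintro a ha hb
  simp only [Finset.mem_image, Finset.mem_range] at ha
  simp only [Finset.mem_singleton] at hb
  obtain ⟨i, hi, rfl⟩ := ha
  have h4 : 2 ^ 2 ≤ 2 ^ s := Nat.pow_le_pow_right (by norm_num) hs
  norm_num at h4
  rcases i with _ | j
  · simp at hb; omega
  · have e1 : 2^(j+1) = 2 * 2^j := by ring
    have e2 : 2^s = 2 * 2^(s-1) := by
      rw [← pow_succ']; congr 1; omega
    omega

lemma card_dirs {s : ℕ} (hs : 2 ≤ s) : (dirs s).card = s + 1 := by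
  rw [dirs, Finset.card_union_of_disjoint (dirs_disjoint hs),
    Finset.card_image_of_injective _
      (fun a b hab => Nat.pow_right_injective (le_refl 2) hab),
    Finset.card_range, Finset.card_singleton]

noncomputable def edir {N : ℕ} : Sym2 (Fin N) → ℕ :=
  Sym2.lift ⟨fun x y => x.val ^^^ y.val, fun _ _ => Nat.xor_comm _ _⟩

@[simp] lemma edir_mk {N : ℕ} (x y : Fin N) : edir s(x, y) = x.val ^^^ y.val := rfl

lemma adj_iff {s : ℕ} {x y : Fin (2^s)} :
    (foldedHypercube s).Adj x y ↔ x ≠ y ∧ (x.val ^^^ y.val) ∈ dirs s := by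
  have hc : y.val ^^^ x.val = x.val ^^^ y.val := Nat.xor_comm _ _
  simp only [foldedHypercube, SimpleGraph.fromRel_adj, hc]
  constructor
  · rintro ⟨hne, h | h⟩ <;> exact ⟨hne, mem_dirs.mpr h⟩
  · rintro ⟨hne, hm⟩
    exact ⟨hne, Or.inl (mem_dirs.mp hm)⟩

/-! ### The bridge between `boundaryCount` and crossing counts -/

variable (s : ℕ) (S : Finset (Fin (2^s)))

noncomputable def finOf (u : ℕ) : Fin (2^s) := ⟨u % 2^s, Nat.mod_lt _ (by positivity)⟩

lemma finOf_val {u : ℕ} (h : u < 2^s) : (finOf s u).val = u := Nat.mod_eq_of_lt h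

lemma finOf_val_fin (x : Fin (2^s)) : finOf s x.val = x := Fin.ext (Nat.mod_eq_of_lt x.isLt)

noncomputable def Sv : Finset ℕ := S.image Fin.val

lemma mem_Sv {u : ℕ} (hu : u < 2^s) : u ∈ Sv s S ↔ finOf s u ∈ S := by
  unfold Sv
  simp only [Finset.mem_image]
  constructor
  · rintro ⟨w, hw, rfl⟩; rwa [finOf_val_fin]
  · intro h; exact ⟨finOf s u, h, finOf_val s hu⟩

lemma Sv_subset : Sv s S ⊆ range (2^s) := by
  intro u hu
  rw [Sv, Finset.mem_image] at hu
  obtain ⟨w, -, rfl⟩ := hu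
  exact Finset.mem_range.mpr w.isLt

lemma card_Sv : (Sv s S).card = S.card :=
  Finset.card_image_of_injective _ Fin.val_injective

noncomputable def crossCount (d : ℕ) : ℕ :=
  ((range (2^s)).filter (fun u => ¬(u ∈ Sv s S ↔ u ^^^ d ∈ Sv s S))).card

noncomputable def EE : Finset (Sym2 (Fin (2^s))) :=
  (foldedHypercube s).edgeFinset.filter (fun e => ∃ x y, e = s(x, y) ∧ x ∈ S ∧ y ∉ S)

lemma boundaryCount_eq : boundaryCount (foldedHypercube s) S = (EE s S).card := by
  unfold boundaryCount EE
  refine Finset.card_bij (fun e _ => e) ?_ ?_ ?_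
  · intro e he
    simp only [Finset.mem_filter, SimpleGraph.mem_edgeFinset] at he ⊢
    exact he
  · intro a _ b _ h; exact h
  · intro e he
    refine ⟨e, ?_, rfl⟩
    simp only [Finset.mem_filter, SimpleGraph.mem_edgeFinset] at he ⊢
    exact he

lemma crossCount_eq (hs : 1 ≤ s) {d : ℕ} (hd : d ∈ dirs s) :
    crossCount s S d = 2 * ((EE s S).filter (fun e => edir e = d)).card := by
  have hdlt : d < 2^s := dirs_lt hd
  have hd0 : d ≠ 0 := dirs_ne_zero hs hd
  have hmaps : ∀ u ∈ (range (2^s)).filter (fun u => ¬(u ∈ Sv s S ↔ u ^^^ d ∈ Sv s S)),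
      s(finOf s u, finOf s (u ^^^ d)) ∈ (EE s S).filter (fun e => edir e = d) := by
    intro u hu
    rw [Finset.mem_filter, Finset.mem_range] at hu
    obtain ⟨huN, hcross⟩ := hu
    have hxN : u ^^^ d < 2^s := Nat.xor_lt_two_pow huN hdlt
    have hne : finOf s u ≠ finOf s (u ^^^ d) := by
      intro h
      have h2 := congrArg Fin.val h
      rw [finOf_val s huN, finOf_val s hxN] at h2
      have h3 : u ^^^ (u ^^^ d) = u ^^^ u := by conv_lhs => rw [← h2]
      rw [xor_xor_self, Nat.xor_self] at h3
      exact hd0 h3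
    have hxor : (finOf s u).val ^^^ (finOf s (u ^^^ d)).val = d := by
      rw [finOf_val s huN, finOf_val s hxN, xor_xor_self]
    have hadj : (foldedHypercube s).Adj (finOf s u) (finOf s (u ^^^ d)) :=
      adj_iff.mpr ⟨hne, by rw [hxor]; exact hd⟩
    rw [Finset.mem_filter, EE, Finset.mem_filter, SimpleGraph.mem_edgeFinset]
    refine ⟨⟨?_, ?_⟩, ?_⟩
    · exact (SimpleGraph.mem_edgeSet _).mpr hadj
    · by_cases hu1 : u ∈ Sv s S
      · have hu2 : u ^^^ d ∉ Sv s S := fun h => hcross ⟨fun _ => h, fun _ => hu1⟩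
        exact ⟨finOf s u, finOf s (u ^^^ d), rfl,
          (mem_Sv s S huN).mp hu1, fun h => hu2 ((mem_Sv s S hxN).mpr h)⟩
      · have hu2 : u ^^^ d ∈ Sv s S := by
          by_contra h
          exact hcross ⟨fun h1 => absurd h1 hu1, fun h2 => absurd h2 h⟩
        exact ⟨finOf s (u ^^^ d), finOf s u, Sym2.eq_swap.symm,
          (mem_Sv s S hxN).mp hu2, fun h => hu1 ((mem_Sv s S huN).mpr h)⟩
    · rw [edir_mk, hxor]
  rw [crossCount, Finset.card_eq_sum_card_fiberwise hmaps]
  have hfib : ∀ e ∈ (EE s S).filter (fun e => edir e = d),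
      (((range (2^s)).filter (fun u => ¬(u ∈ Sv s S ↔ u ^^^ d ∈ Sv s S))).filter
        (fun u => s(finOf s u, finOf s (u ^^^ d)) = e)).card = 2 := by
    intro e
    induction e using Sym2.inductionOn with
    | hf x y =>
      intro he
      rw [Finset.mem_filter] at he
      obtain ⟨heE, hedir⟩ := he
      rw [EE, Finset.mem_filter, SimpleGraph.mem_edgeFinset] at heE
      obtain ⟨heSet, hexy⟩ := heE
      have hadj : (foldedHypercube s).Adj x y := (SimpleGraph.mem_edgeSet _).mp heSet
      have hne : x ≠ y := hadj.ne
      rw [edir_mk] at hedir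
      have hvals : x.val ≠ y.val := fun h => hne (Fin.ext h)
      have hyx : (x.val) ^^^ d = y.val := by
        rw [← hedir, xor_xor_self]
      have hxy : (y.val) ^^^ d = x.val := by
        rw [← hedir, Nat.xor_comm x.val y.val, xor_xor_self]
      have hcross : (x ∈ S ∧ y ∉ S) ∨ (y ∈ S ∧ x ∉ S) := by
        obtain ⟨a, b, hab, haS, hbS⟩ := hexy
        rw [Sym2.eq_iff] at hab
        rcases hab with ⟨rfl, rfl⟩ | ⟨rfl, rfl⟩
        · exact Or.inl ⟨haS, hbS⟩
        · exact Or.inr ⟨haS, hbS⟩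
      have hset : ((range (2^s)).filter (fun u => ¬(u ∈ Sv s S ↔ u ^^^ d ∈ Sv s S))).filter
          (fun u => s(finOf s u, finOf s (u ^^^ d)) = s(x, y)) = {x.val, y.val} := by
        ext u
        simp only [Finset.mem_filter, Finset.mem_range, Finset.mem_insert, Finset.mem_singleton]
        constructor
        · rintro ⟨⟨huN, -⟩, heq⟩
          rw [Sym2.eq_iff] at heq
          rcases heq with ⟨h1, -⟩ | ⟨h1, -⟩
          · left; rw [← congrArg Fin.val h1, finOf_val s huN]
          · right; rw [← congrArg Fin.val h1, finOf_val s huN]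
        · have hxS : x.val ∈ Sv s S ↔ x ∈ S := by
            rw [mem_Sv s S x.isLt, finOf_val_fin]
          have hyS : y.val ∈ Sv s S ↔ y ∈ S := by
            rw [mem_Sv s S y.isLt, finOf_val_fin]
          rintro (rfl | rfl)
          · refine ⟨⟨x.isLt, ?_⟩, ?_⟩
            · rw [hyx]
              intro hiff
              rw [hxS, hyS] at hiff
              rcases hcross with ⟨h1, h2⟩ | ⟨h1, h2⟩
              · exact h2 (hiff.mp h1)
              · exact h2 (hiff.mpr h1)
            · rw [hyx, finOf_val_fin, finOf_val_fin]
          · refine ⟨⟨y.isLt, ?_⟩, ?_⟩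
            · rw [hxy]
              intro hiff
              rw [hxS, hyS] at hiff
              rcases hcross with ⟨h1, h2⟩ | ⟨h1, h2⟩
              · exact h2 (hiff.mpr h1)
              · exact h2 (hiff.mp h1)
            · rw [hxy, finOf_val_fin, finOf_val_fin, Sym2.eq_swap]
      rw [hset, Finset.card_insert_of_notMem (by simpa using hvals), Finset.card_singleton]
  rw [Finset.sum_congr rfl hfib, Finset.sum_const, smul_eq_mul, mul_comm]

lemma bridge (hs : 1 ≤ s) :
    2 * boundaryCount (foldedHypercube s) S = ∑ d ∈ dirs s, crossCount s S d := by
  have h1 : (EE s S).card = ∑ d ∈ dirs s, ((EE s S).filter (fun e => edir e = d)).card := by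
    refine Finset.card_eq_sum_card_fiberwise ?_
    intro e
    induction e using Sym2.inductionOn with
    | hf x y =>
      intro he
      rw [EE, Finset.mem_coe, Finset.mem_filter, SimpleGraph.mem_edgeFinset] at he
      have hadj : (foldedHypercube s).Adj x y := (SimpleGraph.mem_edgeSet _).mp he.1
      rw [edir_mk]
      exact (adj_iff.mp hadj).2
  rw [boundaryCount_eq, h1, Finset.mul_sum]
  exact Finset.sum_congr rfl fun d hd => (crossCount_eq s S hs hd).symm

/-! ### The ±1 indicator function and its sums -/

noncomputable def fS (u : ℕ) : ℤ := if u ∈ Sv s S then 1 else -1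

lemma fS_sq (u : ℕ) : fS s S u * fS s S u = 1 := by
  unfold fS; split <;> norm_num

lemma crossCount_le (d : ℕ) : crossCount s S d ≤ 2^s := by
  calc crossCount s S d ≤ (range (2^s)).card := Finset.card_filter_le _ _
    _ = 2^s := Finset.card_range _

lemma sum_fS_mul (d : ℕ) :
    ∑ u ∈ range (2^s), fS s S u * fS s S (u ^^^ d)
      = (2^s : ℤ) - 2 * (crossCount s S d : ℤ) := by
  rw [← Finset.sum_filter_add_sum_filter_not (range (2^s))
    (fun u => ¬(u ∈ Sv s S ↔ u ^^^ d ∈ Sv s S))]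
  have h1 : ∀ u ∈ (range (2^s)).filter (fun u => ¬(u ∈ Sv s S ↔ u ^^^ d ∈ Sv s S)),
      fS s S u * fS s S (u ^^^ d) = -1 := by
    intro u hu
    rw [Finset.mem_filter] at hu
    unfold fS
    by_cases h : u ∈ Sv s S
    · rw [if_pos h, if_neg (fun h2 => hu.2 ⟨fun _ => h2, fun _ => h⟩)]; ring
    · rw [if_neg h, if_pos (by
        by_contra h2
        exact hu.2 ⟨fun h3 => absurd h3 h, fun h3 => absurd h3 h2⟩)]
      ring
  have h2 : ∀ u ∈ (range (2^s)).filter (fun u => ¬¬(u ∈ Sv s S ↔ u ^^^ d ∈ Sv s S)),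
      fS s S u * fS s S (u ^^^ d) = 1 := by
    intro u hu
    rw [Finset.mem_filter, not_not] at hu
    unfold fS
    by_cases h : u ∈ Sv s S
    · rw [if_pos h, if_pos (hu.2.mp h)]; ring
    · rw [if_neg h, if_neg (fun h2 => h (hu.2.mpr h2))]; ring
  rw [Finset.sum_congr rfl h1, Finset.sum_congr rfl h2, Finset.sum_const, Finset.sum_const]
  have hsplit := Finset.card_filter_add_card_filter_not
    (s := range (2^s)) (p := fun u => ¬(u ∈ Sv s S ↔ u ^^^ d ∈ Sv s S))
  rw [Finset.card_range] at hsplit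
  have hcc : ((range (2^s)).filter (fun u => ¬(u ∈ Sv s S ↔ u ^^^ d ∈ Sv s S))).card
      = crossCount s S d := rfl
  rw [hcc] at hsplit ⊢
  have hle := crossCount_le s S d
  rw [show ((range (2^s)).filter (fun u => ¬¬(u ∈ Sv s S ↔ u ^^^ d ∈ Sv s S))).card
      = 2^s - crossCount s S d by omega]
  simp only [nsmul_eq_mul, mul_one, mul_neg_one]
  rw [Nat.cast_sub hle]
  push_cast
  ring

lemma sum_fS :
    ∑ u ∈ range (2^s), fS s S u = 2 * (S.card : ℤ) - 2^s := by
  have e1 : (range (2^s)).filter (fun u => u ∈ Sv s S) = Sv s S := by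
    rw [Finset.filter_mem_eq_inter, Finset.inter_eq_right.mpr (Sv_subset s S)]
  rw [← Finset.sum_filter_add_sum_filter_not (range (2^s)) (fun u => u ∈ Sv s S)]
  have h1 : ∀ u ∈ (range (2^s)).filter (fun u => u ∈ Sv s S), fS s S u = 1 := by
    intro u hu; rw [Finset.mem_filter] at hu; exact if_pos hu.2
  have h2 : ∀ u ∈ (range (2^s)).filter (fun u => ¬(u ∈ Sv s S)), fS s S u = -1 := by
    intro u hu; rw [Finset.mem_filter] at hu; exact if_neg hu.2
  rw [Finset.sum_congr rfl h1, Finset.sum_congr rfl h2, Finset.sum_const, Finset.sum_const]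
  have hsplit := Finset.card_filter_add_card_filter_not
    (s := range (2^s)) (p := fun u => u ∈ Sv s S)
  rw [Finset.card_range] at hsplit
  have hcard : ((range (2^s)).filter (fun u => u ∈ Sv s S)).card = S.card := by
    rw [e1, card_Sv]
  have hle : S.card ≤ 2^s := by omega
  rw [hcard, show ((range (2^s)).filter (fun u => ¬(u ∈ Sv s S))).card = 2^s - S.card by omega]
  simp only [nsmul_eq_mul, mul_one, mul_neg_one]
  rw [Nat.cast_sub hle]
  push_cast
  ring

/-! ### The eigenvalue bound -/

lemma lam_le {s : ℕ} (hs : 2 ≤ s) {a : ℕ} (ha : a < 2^s) (h0 : a ≠ 0) :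
    ∑ d ∈ dirs s, chi s a d ≤ (s : ℤ) - 3 := by
  set k := ((range s).filter (fun i => a.testBit i)).card with hk
  have hk1 : 1 ≤ k := by
    obtain ⟨i, his, hib⟩ := exists_testBit ha h0
    exact Finset.card_pos.mpr ⟨i, Finset.mem_filter.mpr ⟨Finset.mem_range.mpr his, hib⟩⟩
  have hkles : k ≤ s := by
    calc k ≤ (range s).card := Finset.card_filter_le _ _
      _ = s := Finset.card_range _
  have hsum : ∑ d ∈ dirs s, chi s a d = ((s:ℤ) - 2*k) + (-1)^k := by
    rw [dirs, Finset.sum_union (dirs_disjoint hs), Finset.sum_singleton, chi_ones]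
    congr 1
    rw [Finset.sum_image (fun x _ y _ h => Nat.pow_right_injective (le_refl 2) h)]
    have hterm : ∀ i ∈ range s, chi s a (2^i) = if a.testBit i then (-1:ℤ) else 1 :=
      fun i hi => chi_two_pow s a i (mem_range.mp hi)
    rw [Finset.sum_congr rfl hterm, Finset.sum_ite, Finset.sum_const, Finset.sum_const]
    have hsplit := Finset.card_filter_add_card_filter_not
      (s := range s) (p := fun i => a.testBit i = true)
    rw [Finset.card_range] at hsplit
    have hkk : ((range s).filter (fun i => a.testBit i = true)).card = k := rfl
    rw [hkk] at hsplit
    rw [show ((range s).filter (fun i => ¬(a.testBit i = true))).card = s - k by omega]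
    simp only [nsmul_eq_mul, mul_one, mul_neg_one]
    rw [Nat.cast_sub hkles]
    push_cast
    ring
  rw [hsum]
  rcases eq_or_lt_of_le hk1 with h1 | h2
  · rw [← h1]; push_cast; linarith
  · have hp : (-1 : ℤ)^k ≤ 1 := by
      rcases Nat.even_or_odd k with he | ho
      · rw [he.neg_one_pow]
      · rw [ho.neg_one_pow]; norm_num
    have hk2 : (2 : ℤ) ≤ (k : ℤ) := by exact_mod_cast h2
    linarith

/-! ### The lower bound -/

lemma lower_bound {s : ℕ} (hs : 2 ≤ s) (S : Finset (Fin (2^s)))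
    (hcard : S.card = 2^(s-1)) :
    2^s ≤ boundaryCount (foldedHypercube s) S := by
  have hN2 : (2:ℤ) * (2^(s-1) : ℤ) = 2^s := by
    rw [← pow_succ']
    congr 1
    omega
  set F : ℕ → ℤ := fun a => ∑ u ∈ range (2^s), fS s S u * chi s a u with hF
  have hF0 : F 0 = 0 := by
    rw [hF]
    simp only [chi_zero_left, mul_one]
    rw [sum_fS, hcard]
    push_cast
    linarith [hN2]
  have hPar : ∑ a ∈ range (2^s), (F a)^2 = (2^s : ℤ) * (2^s : ℤ) := by
    have h := key_sum s (fS s S) 0 (by positivity)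
    simp only [chi_zero_right, mul_one, Nat.xor_zero] at h
    calc ∑ a ∈ range (2^s), (F a)^2
        = ∑ a ∈ range (2^s), (∑ u ∈ range (2^s), fS s S u * chi s a u)^2 := rfl
      _ = (2^s : ℤ) * ∑ u ∈ range (2^s), fS s S u * fS s S u := h
      _ = (2^s : ℤ) * (2^s : ℤ) := by
          rw [Finset.sum_congr rfl (fun u _ => fS_sq s S u), Finset.sum_const, card_range,
            nsmul_eq_mul, mul_one]
          push_cast
          ring
  have hmain : (2^s : ℤ) * ∑ d ∈ dirs s, ((2^s : ℤ) - 2 * (crossCount s S d : ℤ))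
      = ∑ a ∈ range (2^s), (F a)^2 * (∑ d ∈ dirs s, chi s a d) := by
    rw [Finset.mul_sum]
    have hterm : ∀ d ∈ dirs s, (2^s : ℤ) * ((2^s : ℤ) - 2 * (crossCount s S d : ℤ))
        = ∑ a ∈ range (2^s), (F a)^2 * chi s a d := by
      intro d hd
      rw [← sum_fS_mul, ← key_sum s (fS s S) d (dirs_lt hd)]
    rw [Finset.sum_congr rfl hterm, Finset.sum_comm]
    exact Finset.sum_congr rfl fun a _ => (Finset.mul_sum _ _ _).symm
  have hb : ∑ a ∈ range (2^s), (F a)^2 * (∑ d ∈ dirs s, chi s a d)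
      ≤ ∑ a ∈ range (2^s), (F a)^2 * ((s:ℤ) - 3) := by
    refine Finset.sum_le_sum fun a ha => ?_
    rcases eq_or_ne a 0 with rfl | h0
    · rw [hF0]; norm_num
    · exact mul_le_mul_of_nonneg_left (lam_le hs (mem_range.mp ha) h0) (sq_nonneg _)
  have hBr := bridge s S (by omega)
  have hBrZ : ∑ d ∈ dirs s, (crossCount s S d : ℤ)
      = 2 * (boundaryCount (foldedHypercube s) S : ℤ) := by
    rw [← Nat.cast_sum, ← hBr]
    push_cast
    ring
  have hLHS : ∑ d ∈ dirs s, ((2^s : ℤ) - 2 * (crossCount s S d : ℤ))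
      = ((s:ℤ) + 1) * 2^s - 4 * (boundaryCount (foldedHypercube s) S : ℤ) := by
    rw [Finset.sum_sub_distrib, Finset.sum_const, card_dirs hs, ← Finset.mul_sum, hBrZ]
    push_cast
    ring
  have hRHS : ∑ a ∈ range (2^s), (F a)^2 * ((s:ℤ) - 3) = ((s:ℤ) - 3) * (2^s * 2^s) := by
    rw [← Finset.sum_mul, hPar]
    ring
  have hfinal : (2^s : ℤ) * (((s:ℤ) + 1) * 2^s - 4 * (boundaryCount (foldedHypercube s) S : ℤ))
      ≤ ((s:ℤ) - 3) * (2^s * 2^s) := by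
    rw [← hLHS, ← hRHS, hmain]
    exact hb
  have hNpos : (0:ℤ) < 2^s := by positivity
  have h2 : ((s:ℤ) + 1) * 2^s - 4 * (boundaryCount (foldedHypercube s) S : ℤ)
      ≤ ((s:ℤ) - 3) * 2^s := by
    nlinarith
  have h3 : (2^s : ℤ) ≤ (boundaryCount (foldedHypercube s) S : ℤ) := by nlinarith
  exact_mod_cast h3

/-! ### The witness set -/

noncomputable def S0 (s : ℕ) : Finset (Fin (2^s)) :=
  Finset.univ.filter (fun u => u.val < 2^(s-1))

lemma card_S0 (hs : 1 ≤ s) : (S0 s).card = 2^(s-1) := by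
  have key : (S0 s).card = (Finset.range (2^(s-1))).card := by
    rw [S0]
    refine Finset.card_bij (fun u _ => u.val) ?_ ?_ ?_
    · intro u hu
      rw [Finset.mem_filter] at hu
      exact Finset.mem_range.mpr hu.2
    · intro a _ b _ h; exact Fin.ext h
    · intro v hv
      have hvN : v < 2^s := lt_of_lt_of_le (mem_range.mp hv)
        (Nat.pow_le_pow_right (by norm_num) (by omega))
      exact ⟨⟨v, hvN⟩, Finset.mem_filter.mpr ⟨Finset.mem_univ _, mem_range.mp hv⟩, rfl⟩
  rw [key, Finset.card_range]

lemma lt_half_iff {s u : ℕ} (hs : 1 ≤ s) (hu : u < 2^s) :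
    u < 2^(s-1) ↔ u.testBit (s-1) = false := by
  have h2 : 2^s = 2 * 2^(s-1) := by rw [← pow_succ']; congr 1; omega
  rw [Nat.testBit_eq_decide_div_mod_eq]
  rcases lt_or_ge u (2^(s-1)) with h | h
  · rw [Nat.div_eq_of_lt h]
    simp [h]
  · have hpos : 0 < 2^(s-1) := by positivity
    have hd : u / 2^(s-1) = 1 := by
      have ha : 1 ≤ u / 2^(s-1) := (Nat.one_le_div_iff hpos).mpr h
      have hb : u / 2^(s-1) < 2 := by
        rw [Nat.div_lt_iff_lt_mul hpos]
        omega
      omega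
    rw [hd]
    simp
    omega

lemma mem_Sv_S0 {s u : ℕ} (hs : 1 ≤ s) (hu : u < 2^s) :
    u ∈ Sv s (S0 s) ↔ u.testBit (s-1) = false := by
  rw [mem_Sv s _ hu, S0, Finset.mem_filter]
  simp only [Finset.mem_univ, true_and]
  rw [finOf_val s hu]
  exact lt_half_iff hs hu

lemma crossCount_S0 {s : ℕ} (hs : 1 ≤ s) {d : ℕ} (hd : d < 2^s) :
    crossCount s (S0 s) d = if d.testBit (s-1) then 2^s else 0 := by
  rw [crossCount]
  cases hb : d.testBit (s-1) with
  | false =>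
    rw [if_neg (by simp)]
    rw [Finset.filter_false_of_mem, Finset.card_empty]
    intro u hu
    have huN := Finset.mem_range.mp hu
    have hxN : u ^^^ d < 2^s := Nat.xor_lt_two_pow huN hd
    rw [not_not, mem_Sv_S0 hs huN, mem_Sv_S0 hs hxN, Nat.testBit_xor, hb, Bool.xor_false]
  | true =>
    rw [if_pos rfl]
    rw [Finset.filter_true_of_mem, Finset.card_range]
    intro u hu
    have huN := Finset.mem_range.mp hu
    have hxN : u ^^^ d < 2^s := Nat.xor_lt_two_pow huN hd
    rw [mem_Sv_S0 hs huN, mem_Sv_S0 hs hxN, Nat.testBit_xor, hb, Bool.xor_true]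
    cases u.testBit (s-1) <;> simp

lemma boundary_S0 {s : ℕ} (hs : 2 ≤ s) :
    boundaryCount (foldedHypercube s) (S0 s) = 2^s := by
  have h := bridge s (S0 s) (by omega)
  have hsum : ∑ d ∈ dirs s, crossCount s (S0 s) d = 2 * 2^s := by
    rw [dirs, Finset.sum_union (dirs_disjoint hs),
      Finset.sum_image (fun x _ y _ hxy => Nat.pow_right_injective (le_refl 2) hxy),
      Finset.sum_singleton]
    have h1 : ∀ i ∈ range s, crossCount s (S0 s) (2^i) = if i = s-1 then 2^s else 0 := by
      intro i hi
      rw [crossCount_S0 (by omega) (Nat.pow_lt_pow_right (by norm_num) (mem_range.mp hi)),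
        Nat.testBit_two_pow]
      by_cases hieq : i = s - 1
      · rw [if_pos (by simp [hieq]), if_pos hieq]
      · rw [if_neg (by simp [hieq]), if_neg hieq]
    have h2 : crossCount s (S0 s) (2^s - 1) = 2^s := by
      have hlt : 2^s - 1 < 2^s := by
        have : 0 < 2^s := by positivity
        omega
      rw [crossCount_S0 (by omega) hlt, Nat.testBit_two_pow_sub_one,
        if_pos (by simp; omega)]
    rw [Finset.sum_congr rfl h1, h2, Finset.sum_ite_eq' (range s) (s-1) (fun _ => 2^s),
      if_pos (mem_range.mpr (by omega))]
    ring
  omega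

end FQAux

/-- For `s ≥ 2`, `θ_{FQ^s}(2^{s−1}) = 2^s`. -/
theorem foldedHypercube_minCut_half (s : ℕ) (hs : 2 ≤ s) :
    minCut (foldedHypercube s) (2 ^ (s - 1)) = 2 ^ s := by
  have hws : (FQAux.S0 s).card = 2^(s-1) := FQAux.card_S0 s (by omega)
  have hwb : boundaryCount (foldedHypercube s) (FQAux.S0 s) = 2^s := FQAux.boundary_S0 hs
  rw [minCut]
  apply le_antisymm
  · exact Nat.sInf_le ⟨FQAux.S0 s, hws, hwb.symm⟩
  · refine le_csInf ⟨_, FQAux.S0 s, hws, rfl⟩ ?_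
    rintro c ⟨S, hS, rfl⟩
    exact FQAux.lower_bound hs S hS
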